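/- arXiv:1710.00928 — 4 statements merged into one kernel-verified Lean document; each statement's English description precedes it below -/
import Mathlib

section
/- Let A be a local ℤ_p-algebra with maximal ideal m, m² = 0, residue field A/m ≅ 𝔽_p, and pA ≠ 0. The restriction map r sending a ℤ_p-algebra homomorphism φ: A → ℤ/p²ℤ to the induced 𝔽_p-linear map m → pℤ/p²ℤ is injective, and its image consists exactly of the 𝔽_p-linear maps ψ: m → pℤ/p²ℤ with ψ(p·1_A) = p. -/
open IsLocalRing

variable {p : ℕ} [Fact p.Prime]

/-- `ZMod (p^2)` as a `ℤ_[p]`-algebra via the canonical map. -/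
noncomputable instance : Algebra ℤ_[p] (ZMod (p ^ 2)) :=
  (PadicInt.toZModPow 2).toAlgebra

/-- Every ring hom `ℤ_[p] →+* ZMod p` agrees with the canonical one. -/
theorem padic_hom_eq_toZMod (g : ℤ_[p] →+* ZMod p) (c : ℤ_[p]) :
    g c = PadicInt.toZMod c := by
  have h1 : c - ((PadicInt.toZMod c).val : ℤ_[p]) ∈ maximalIdeal ℤ_[p] := by
    rw [← PadicInt.ker_toZMod, RingHom.mem_ker, map_sub, map_natCast, ZMod.natCast_val,
      ZMod.cast_id, sub_self]
  rw [PadicInt.maximalIdeal_eq_span_p, Ideal.mem_span_singleton] at h1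
  obtain ⟨d, hd⟩ := h1
  have hg : ∀ f : ℤ_[p] →+* ZMod p, f c = ((PadicInt.toZMod c).val : ZMod p) := by
    intro f
    have h2 : f (c - ((PadicInt.toZMod c).val : ℤ_[p])) = 0 := by
      rw [hd]
      simp [ZMod.natCast_self]
    rw [map_sub, map_natCast, sub_eq_zero] at h2
    exact h2
  rw [hg g, hg PadicInt.toZMod, ZMod.natCast_val, ZMod.cast_id]

theorem sq_zero_mem_span (y : ZMod (p ^ 2)) (hy : y * y = 0) :
    y ∈ Ideal.span {(p : ZMod (p ^ 2))} := by
  haveI : NeZero (p ^ 2) := ⟨pow_ne_zero 2 (Fact.out : p.Prime).ne_zero⟩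
  have hval : (y.val : ZMod (p ^ 2)) = y := by rw [ZMod.natCast_val, ZMod.cast_id]
  have h1 : ((y.val * y.val : ℕ) : ZMod (p ^ 2)) = 0 := by push_cast [hval]; exact hy
  rw [ZMod.natCast_eq_zero_iff] at h1
  have h2 : p ∣ y.val := by
    have hdvd : p ∣ y.val * y.val := dvd_trans (dvd_pow_self p two_ne_zero) h1
    rcases (Nat.Prime.dvd_mul Fact.out).mp hdvd with h | h <;> exact h
  obtain ⟨k, hk⟩ := h2
  rw [Ideal.mem_span_singleton]
  exact ⟨k, by rw [← hval, hk]; push_cast; ring⟩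

theorem p_mul_mod (y : ZMod (p ^ 2)) :
    (p : ZMod (p ^ 2)) * y = (p : ZMod (p ^ 2)) * ((y.val % p : ℕ) : ZMod (p ^ 2)) := by
  haveI : NeZero (p ^ 2) := ⟨pow_ne_zero 2 (Fact.out : p.Prime).ne_zero⟩
  have hval : (y.val : ZMod (p ^ 2)) = y := by rw [ZMod.natCast_val, ZMod.cast_id]
  have h : p * (y.val % p) ≡ p * y.val [MOD p ^ 2] := by
    have h2 := Nat.ModEq.mul_left' p (Nat.mod_modEq y.val p)
    rwa [← pow_two] at h2
  have h3 := (ZMod.natCast_eq_natCast_iff _ _ _).mpr h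
  push_cast at h3
  conv_lhs => rw [← hval]
  exact h3.symm

/-- Lemma on mod p² homomorphisms: for `A` a local `ℤ_p`-algebra with `m² = 0`, residue
field `𝔽_p`, and `pA ≠ 0`, restriction to the maximal ideal `m` is injective on
`ℤ_p`-algebra homomorphisms `A → ℤ/p²ℤ`, restrictions land in `pℤ/p²ℤ` (and send `p·1_A`
to `p`), and conversely every additive (equivalently `𝔽_p`-linear) map `m → pℤ/p²ℤ`
sending `p·1_A` to `p` extends to a `ℤ_p`-algebra homomorphism. -/
theorem mod_p_sq_homs
    (A : Type) [CommRing A] [Algebra ℤ_[p] A] [IsLocalRing A]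
    (hres : Nonempty (ResidueField A ≃+* ZMod p))
    (hpA : (p : A) ≠ 0)
    (hm2 : (maximalIdeal A) ^ 2 = 0)
    (hpm : (p : A) ∈ maximalIdeal A) :
    (∀ φ ψ : A →ₐ[ℤ_[p]] ZMod (p ^ 2),
        (∀ x ∈ maximalIdeal A, φ x = ψ x) → φ = ψ) ∧
    (∀ φ : A →ₐ[ℤ_[p]] ZMod (p ^ 2), ∀ x ∈ maximalIdeal A,
        φ x ∈ Ideal.span {(p : ZMod (p ^ 2))}) ∧
    (∀ ψ : (maximalIdeal A) →+ ZMod (p ^ 2),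
        (∀ x, ψ x ∈ Ideal.span {(p : ZMod (p ^ 2))}) →
        ψ ⟨(p : A), hpm⟩ = (p : ZMod (p ^ 2)) →
        ∃ φ : A →ₐ[ℤ_[p]] ZMod (p ^ 2), ∀ x : maximalIdeal A, φ x = ψ x) := by
  haveI : NeZero p := ⟨(Fact.out : p.Prime).ne_zero⟩
  haveI : NeZero (p ^ 2) := ⟨pow_ne_zero 2 (Fact.out : p.Prime).ne_zero⟩
  haveI : Fact (1 < p) := ⟨(Fact.out : p.Prime).one_lt⟩
  obtain ⟨e⟩ := hres
  set π : A →+* ZMod p := e.toRingHom.comp (residue A) with hπdef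
  have hmem : ∀ x : A, x - ((π x).val : A) ∈ maximalIdeal A := by
    intro x
    have h0 : π (x - ((π x).val : A)) = 0 := by
      rw [map_sub, map_natCast, ZMod.natCast_val, ZMod.cast_id, sub_self]
    have h1 : residue A (x - ((π x).val : A)) = 0 := by
      apply e.injective
      rw [map_zero]
      exact h0
    rwa [residue_eq_zero_iff] at h1
  have hmul0 : ∀ x ∈ maximalIdeal A, ∀ y ∈ maximalIdeal A, x * y = 0 := by
    intro x hx y hy
    have h := Ideal.mul_mem_mul hx hy
    rw [← pow_two, hm2] at h
    simpa using h
  refine ⟨?_, ?_, ?_⟩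
  · -- injectivity
    intro φ ψ h
    apply AlgHom.ext
    intro x
    have e1 : φ x = ((π x).val : ZMod (p ^ 2)) + φ (x - ((π x).val : A)) := by
      rw [map_sub, map_natCast]; ring
    have e2 : ψ x = ((π x).val : ZMod (p ^ 2)) + ψ (x - ((π x).val : A)) := by
      rw [map_sub, map_natCast]; ring
    rw [e1, e2, h _ (hmem x)]
  · -- image in span p
    intro φ x hx
    apply sq_zero_mem_span
    rw [← map_mul, hmul0 x hx x hx, map_zero]
  · -- extension
    intro ψ hψ1 hψ2
    have hcongr_psi : ∀ (x : A) (h₁ : x ∈ maximalIdeal A) (y : A) (h₂ : y ∈ maximalIdeal A),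
        x = y → ψ ⟨x, h₁⟩ = ψ ⟨y, h₂⟩ := by
      intro x h₁ y h₂ hxy
      subst hxy
      rfl
    have Hz : ∀ (k : ℤ) (h : (p : A) * (k : A) ∈ maximalIdeal A),
        ψ ⟨(p : A) * (k : A), h⟩ = (p : ZMod (p ^ 2)) * (k : ZMod (p ^ 2)) := by
      intro k h
      have h1 : (⟨(p : A) * (k : A), h⟩ : maximalIdeal A)
          = k • (⟨(p : A), hpm⟩ : maximalIdeal A) := by
        ext
        simp [zsmul_eq_mul, mul_comm]
      rw [h1, map_zsmul, hψ2, zsmul_eq_mul, mul_comm]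
    have C : ∀ (a b : ℕ), a % p = b % p → ∀ h : ((a : A) - (b : A)) ∈ maximalIdeal A,
        ψ ⟨(a : A) - (b : A), h⟩ = (a : ZMod (p ^ 2)) - (b : ZMod (p ^ 2)) := by
      intro a b hab h
      obtain ⟨k, hk⟩ := (Nat.modEq_iff_dvd).mp (Nat.ModEq.symm hab)
      -- hk : (a : ℤ) - b = p * k
      have hval : (a : A) - (b : A) = (p : A) * ((k : ℤ) : A) := by
        have h2 := congrArg (fun z : ℤ => (z : A)) hk
        push_cast at h2
        linear_combination h2
      have hmemk : (p : A) * ((k : ℤ) : A) ∈ maximalIdeal A :=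
        Ideal.mul_mem_right _ _ hpm
      rw [hcongr_psi _ h _ hmemk hval, Hz k hmemk]
      have h3 := congrArg (fun z : ℤ => (z : ZMod (p ^ 2))) hk
      push_cast at h3
      linear_combination -h3
    set n : A → ℕ := fun x => (π x).val with hn
    have hu : ∀ x : A, x - (n x : A) ∈ maximalIdeal A := hmem
    set f : A → ZMod (p ^ 2) :=
      fun x => ((n x : ℕ) : ZMod (p ^ 2)) + ψ ⟨x - (n x : A), hu x⟩ with hf
    have h5 : ∀ (a : ℕ) (v : A) (hv : v ∈ maximalIdeal A) (h : (a : A) * v ∈ maximalIdeal A),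
        ψ ⟨(a : A) * v, h⟩ = (a : ZMod (p ^ 2)) * ψ ⟨v, hv⟩ := by
      intro a v hv h
      have h1 : (⟨(a : A) * v, h⟩ : maximalIdeal A) = a • (⟨v, hv⟩ : maximalIdeal A) := by
        ext
        simp [nsmul_eq_mul]
      rw [h1, map_nsmul, nsmul_eq_mul]
    have hone : f 1 = 1 := by
      have hn1 : n 1 = 1 := by simp [hn, map_one, ZMod.val_one]
      simp only [hf]
      rw [hcongr_psi _ (hu 1) 0 (Submodule.zero_mem _) (by rw [hn1]; push_cast; ring)]
      have h0 : ψ ⟨(0 : A), Submodule.zero_mem _⟩ = 0 := map_zero ψ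
      rw [h0, hn1]
      simp
    have hzero : f 0 = 0 := by
      have hn0 : n 0 = 0 := by simp [hn]
      simp only [hf]
      rw [hcongr_psi _ (hu 0) 0 (Submodule.zero_mem _) (by rw [hn0]; push_cast; ring)]
      have h0 : ψ ⟨(0 : A), Submodule.zero_mem _⟩ = 0 := map_zero ψ
      rw [h0, hn0]
      simp
    have hadd : ∀ x y : A, f (x + y) = f x + f y := by
      intro x y
      have hc : (n x + n y) % p = n (x + y) % p := by
        have h1 : n (x + y) = (n x + n y) % p := by
          simp only [hn, map_add, ZMod.val_add]
        rw [h1, Nat.mod_mod_of_dvd _ dvd_rfl]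
      have h3 : ((n x + n y : ℕ) : A) - ((n (x + y) : ℕ) : A) ∈ maximalIdeal A := by
        have h := Submodule.sub_mem _ (hu (x + y)) (Submodule.add_mem _ (hu x) (hu y))
        have heq : ((n x + n y : ℕ) : A) - ((n (x + y) : ℕ) : A)
            = (x + y - (n (x + y) : A)) - ((x - (n x : A)) + (y - (n y : A))) := by
          push_cast
          ring
        rwa [heq]
      have h4 : (⟨x + y - (n (x + y) : A), hu (x + y)⟩ : maximalIdeal A)
          = ⟨x - (n x : A), hu x⟩ + ⟨y - (n y : A), hu y⟩
            + ⟨((n x + n y : ℕ) : A) - ((n (x + y) : ℕ) : A), h3⟩ := by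
        ext
        simp only [Submodule.coe_add]
        push_cast
        ring
      simp only [hf]
      rw [h4, map_add, map_add, C (n x + n y) (n (x + y)) hc h3]
      push_cast
      ring
    have hmul : ∀ x y : A, f (x * y) = f x * f y := by
      intro x y
      have hc : (n x * n y) % p = n (x * y) % p := by
        have h1 : n (x * y) = n x * n y % p := by
          simp only [hn, map_mul, ZMod.val_mul]
        rw [h1, Nat.mod_mod_of_dvd _ dvd_rfl]
      have hz : (x - (n x : A)) * (y - (n y : A)) = 0 := hmul0 _ (hu x) _ (hu y)
      have hma : (n x : A) * (y - (n y : A)) ∈ maximalIdeal A :=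
        Ideal.mul_mem_left _ _ (hu y)
      have hmb : (n y : A) * (x - (n x : A)) ∈ maximalIdeal A :=
        Ideal.mul_mem_left _ _ (hu x)
      have h3 : ((n x * n y : ℕ) : A) - ((n (x * y) : ℕ) : A) ∈ maximalIdeal A := by
        have h := Submodule.sub_mem _ (hu (x * y)) (Submodule.add_mem _ hma hmb)
        have heq : ((n x * n y : ℕ) : A) - ((n (x * y) : ℕ) : A)
            = (x * y - (n (x * y) : A))
              - ((n x : A) * (y - (n y : A)) + (n y : A) * (x - (n x : A))) := by
          push_cast
          linear_combination -hz
        rwa [heq]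
      have h4 : (⟨x * y - (n (x * y) : A), hu (x * y)⟩ : maximalIdeal A)
          = ⟨(n x : A) * (y - (n y : A)), hma⟩ + ⟨(n y : A) * (x - (n x : A)), hmb⟩
            + ⟨((n x * n y : ℕ) : A) - ((n (x * y) : ℕ) : A), h3⟩ := by
        ext
        simp only [Submodule.coe_add]
        push_cast
        linear_combination hz
      have h6 : ψ ⟨x - (n x : A), hu x⟩ * ψ ⟨y - (n y : A), hu y⟩ = 0 := by
        obtain ⟨a, ha⟩ := Ideal.mem_span_singleton.mp (hψ1 ⟨x - (n x : A), hu x⟩)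
        obtain ⟨b, hb⟩ := Ideal.mem_span_singleton.mp (hψ1 ⟨y - (n y : A), hu y⟩)
        rw [ha, hb]
        have hp2 : ((p ^ 2 : ℕ) : ZMod (p ^ 2)) = 0 := ZMod.natCast_self _
        push_cast at hp2
        linear_combination a * b * hp2
      simp only [hf]
      rw [h4, map_add, map_add, h5 _ _ (hu y) hma, h5 _ _ (hu x) hmb,
        C (n x * n y) (n (x * y)) hc h3]
      push_cast
      linear_combination -h6
    have hcomm : ∀ c : ℤ_[p], f (algebraMap ℤ_[p] A c) = algebraMap ℤ_[p] (ZMod (p ^ 2)) c := by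
      intro c
      have halg : algebraMap ℤ_[p] (ZMod (p ^ 2)) c = PadicInt.toZModPow 2 c := rfl
      have hpi : ∀ d : ℤ_[p], π (algebraMap ℤ_[p] A d) = PadicInt.toZMod d := fun d =>
        padic_hom_eq_toZMod (π.comp (algebraMap ℤ_[p] A)) d
      have h1 : c - ((PadicInt.toZMod c).val : ℤ_[p]) ∈ maximalIdeal ℤ_[p] := by
        rw [← PadicInt.ker_toZMod, RingHom.mem_ker, map_sub, map_natCast, ZMod.natCast_val,
          ZMod.cast_id, sub_self]
      rw [PadicInt.maximalIdeal_eq_span_p, Ideal.mem_span_singleton] at h1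
      obtain ⟨d, hd⟩ := h1
      have hnc : n (algebraMap ℤ_[p] A c) = (PadicInt.toZMod c).val := by
        simp only [hn, hpi]
      have hud : (p : A) * (algebraMap ℤ_[p] A d - (n (algebraMap ℤ_[p] A d) : A)) = 0 :=
        hmul0 _ hpm _ (hu _)
      have hvaleq : algebraMap ℤ_[p] A c - (n (algebraMap ℤ_[p] A c) : A)
          = (p : A) * (((n (algebraMap ℤ_[p] A d) : ℕ) : ℤ) : A) := by
        have h2 : algebraMap ℤ_[p] A c - ((PadicInt.toZMod c).val : A)
            = (p : A) * algebraMap ℤ_[p] A d := by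
          have h3 := congrArg (algebraMap ℤ_[p] A) hd
          rw [map_sub, map_mul, map_natCast, map_natCast] at h3
          exact h3
        rw [hnc, h2]
        push_cast
        linear_combination hud
      have hmemk : (p : A) * (((n (algebraMap ℤ_[p] A d) : ℕ) : ℤ) : A) ∈ maximalIdeal A :=
        Ideal.mul_mem_right _ _ hpm
      have hψc : ψ ⟨algebraMap ℤ_[p] A c - (n (algebraMap ℤ_[p] A c) : A), hu _⟩
          = (p : ZMod (p ^ 2)) * ((n (algebraMap ℤ_[p] A d) : ℕ) : ZMod (p ^ 2)) := by
        rw [hcongr_psi _ (hu _) _ hmemk hvaleq, Hz _ hmemk]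
        push_cast
        ring
      have hdvd : p ∣ p ^ 2 := dvd_pow_self p two_ne_zero
      have hcast : (ZMod.castHom hdvd (ZMod p)) (PadicInt.toZModPow 2 d) = PadicInt.toZMod d :=
        padic_hom_eq_toZMod ((ZMod.castHom hdvd (ZMod p)).comp (PadicInt.toZModPow 2)) d
      have hndval : n (algebraMap ℤ_[p] A d) = (PadicInt.toZModPow 2 d).val % p := by
        show (π (algebraMap ℤ_[p] A d)).val = _
        rw [hpi d, ← hcast, ZMod.castHom_apply, ← ZMod.natCast_val, ZMod.val_natCast]
      have hfinal : (p : ZMod (p ^ 2)) * ((n (algebraMap ℤ_[p] A d) : ℕ) : ZMod (p ^ 2))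
          = (p : ZMod (p ^ 2)) * PadicInt.toZModPow 2 d := by
        rw [hndval]
        exact (p_mul_mod (PadicInt.toZModPow 2 d)).symm
      simp only [hf]
      rw [hψc, hfinal, halg, hnc]
      have h7 := congrArg (PadicInt.toZModPow 2) hd
      rw [map_sub, map_mul, map_natCast, map_natCast] at h7
      linear_combination -h7
    refine ⟨{ toFun := f, map_one' := hone, map_mul' := hmul, map_zero' := hzero,
              map_add' := hadd, commutes' := hcomm }, ?_⟩
    intro x
    show f (x : A) = ψ x
    have hπx : π (x : A) = 0 := by
      have h1 : residue A (x : A) = 0 := (residue_eq_zero_iff (x : A)).mpr x.2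
      show e (residue A (x : A)) = 0
      rw [h1, map_zero]
    have hnx : n (x : A) = 0 := by simp [hn, hπx]
    simp only [hf]
    rw [hcongr_psi _ (hu _) _ x.2 (by rw [hnx]; push_cast; ring), hnx]
    simp
end

section
/- Let p ≥ 3 be prime, m ≥ 1, and k an even integer with k ≥ 4 and k ≡ 0 (mod p^(m-1)(p-1)). Then for every n ≥ 1, the n-th coefficient -(2k/B_k)·σ_{k-1}(n) of the Eisenstein series E_k is a p-adic integer divisible by p^m; i.e. E_k ≡ 1 (mod p^m). -/
open Finset

variable (p : ℕ) [Fact p.Prime]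

lemma norm_nat_le_one (n : ℕ) : ‖(n : ℚ_[p])‖ ≤ 1 := by
  simpa using Padic.norm_int_le_one (p := p) n

lemma three_le_aux (t : ℕ) (ht : 2 ≤ t) : t < 3 ^ (t - 1) := by
  induction t with
  | zero => omega
  | succ n ih =>
    rcases Nat.lt_or_ge n 2 with h | h
    · interval_cases n <;> omega
    · have := ih h
      have h2 : n + 1 - 1 = (n - 1) + 1 := by omega
      rw [h2, pow_succ]
      omega

lemma norm_pow_div_le (hp : 3 ≤ p) (t : ℕ) (ht : 2 ≤ t) :
    ‖((p : ℚ_[p]) ^ t / (t : ℚ_[p]))‖ ≤ (p : ℝ) ^ (-2 : ℤ) := by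
  have hp1 : 1 < p := by omega
  have htne : (t : ℚ_[p]) ≠ 0 := by exact_mod_cast Nat.cast_ne_zero.mpr (by omega)
  set v : ℕ := padicValNat p t with hv
  have hval : ‖(t : ℚ_[p])‖ = (p : ℝ) ^ (-(v : ℤ)) := by
    rw [Padic.norm_eq_zpow_neg_valuation htne, Padic.valuation_natCast]
  have hdvd : p ^ v ∣ t := pow_padicValNat_dvd
  have hle : p ^ v ≤ t := Nat.le_of_dvd (by omega) hdvd
  have hlt : t < p ^ (t - 1) := lt_of_lt_of_le (three_le_aux t ht)
    (Nat.pow_le_pow_left hp _)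
  have hvle : v ≤ t - 2 := by
    have : p ^ v < p ^ (t - 1) := lt_of_le_of_lt hle hlt
    have := (Nat.pow_lt_pow_iff_right hp1).mp this
    omega
  rw [norm_div, Padic.norm_p_pow, hval]
  rw [div_eq_mul_inv, ← zpow_neg, ← zpow_add₀ (by positivity : (p:ℝ) ≠ 0)]
  apply zpow_le_zpow_right₀ (by exact_mod_cast hp1.le)
  omega

-- sum of k-th powers over ZMod p, when (p-1) ∣ k and k ≥ 1
lemma zmod_sum_pow (k : ℕ) (hk : 1 ≤ k) (hdk : (p - 1) ∣ k) :
    ∑ x : ZMod p, x ^ k = -1 := by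
  have hp1 : 1 < p := (Fact.out : p.Prime).one_lt
  have : ∀ x : ZMod p, x ^ k = if x = 0 then 0 else 1 := by
    intro x
    split_ifs with h
    · simp [h, zero_pow (by omega : k ≠ 0)]
    · obtain ⟨c, rfl⟩ := hdk
      rw [pow_mul, ZMod.pow_card_sub_one_eq_one h, one_pow]
  rw [Finset.sum_congr rfl fun x _ => this x]
  rw [Finset.sum_ite, Finset.sum_const_zero, zero_add, Finset.sum_const, nsmul_eq_mul, mul_one]
  have hcard : (Finset.univ.filter (fun x : ZMod p => ¬ x = 0)).card = p - 1 := by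
    haveI : NeZero p := ⟨(Fact.out : p.Prime).ne_zero⟩
    rw [Finset.filter_not, Finset.card_sdiff_of_subset (Finset.filter_subset _ _)]
    simp [ZMod.card, Finset.filter_eq']
  rw [hcard]
  haveI : NeZero p := ⟨(Fact.out : p.Prime).ne_zero⟩
  have : ((p - 1 : ℕ) : ZMod p) = (p : ZMod p) - 1 := by
    push_cast [Nat.cast_sub hp1.le]; ring
  rw [this, ZMod.natCast_self, zero_sub]

lemma sum_range_cast (k : ℕ) : (∑ a ∈ Finset.range p, (a : ZMod p) ^ k) = ∑ x : ZMod p, x ^ k := by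
  haveI : NeZero p := ⟨(Fact.out : p.Prime).ne_zero⟩
  exact Finset.sum_nbij' (fun a => (a : ZMod p)) (fun x => x.val)
    (fun a _ => Finset.mem_univ _) (fun x _ => Finset.mem_range.2 (ZMod.val_lt x))
    (fun a ha => ZMod.val_cast_of_lt (Finset.mem_range.1 ha))
    (fun x _ => by simp [ZMod.natCast_val, ZMod.cast_id])
    (fun a _ => rfl)


-- choose identity: C(k+1,i)/(k+1) = C(k,i)/(k+1-i) for i ≤ k, over ℚ
lemma choose_div_eq (i k : ℕ) (h : i ≤ k) :
    (((k + 1).choose i : ℚ)) / (k + 1) = (k.choose i : ℚ) / (k + 1 - i : ℕ) := by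
  have hnat : (k + 1 - i) * (k + 1).choose i = (k + 1) * k.choose i := by
    have h1 : (k + 1).choose (k + 1 - i) = (k + 1).choose i :=
      Nat.choose_symm (by omega)
    have h2 : k + 1 - i = (k - i) + 1 := by omega
    have h3 := Nat.add_one_mul_choose_eq k (k - i)
    have h4 : k.choose (k - i) = k.choose i := Nat.choose_symm h
    rw [← h1, h2, mul_comm, ← h3, h4]
  have h2 : ((k + 1 - i : ℕ) : ℚ) ≠ 0 := by
    have : 0 < k + 1 - i := by omega
    exact_mod_cast this.ne'
  have h3 : ((k : ℚ) + 1) ≠ 0 := by positivity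
  rw [div_eq_div_iff h3 h2]
  have := congrArg (fun n : ℕ => (n : ℚ)) hnat
  push_cast at this
  linarith [this]

noncomputable def bterm (i k : ℕ) : ℚ :=
  bernoulli i * ((k + 1).choose i) * (p : ℚ) ^ (k + 1 - i) / (k + 1)

lemma faulhaber_eq (k : ℕ) :
    ((∑ a ∈ Finset.range p, a ^ k : ℕ) : ℚ) = ∑ i ∈ Finset.range (k + 1), bterm p i k := by
  unfold bterm
  push_cast
  exact sum_range_pow p k

lemma bterm_self (k : ℕ) : bterm p k k = (p : ℚ) * bernoulli k := by
  unfold bterm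
  rw [Nat.choose_succ_self_right]
  have : k + 1 - k = 1 := by omega
  rw [this, pow_one]
  have h3 : ((k : ℚ) + 1) ≠ 0 := by positivity
  push_cast
  field_simp

lemma bterm_norm_le (hp : 3 ≤ p) (i k : ℕ) (h : i < k)
    (hB : ‖((bernoulli i : ℚ) : ℚ_[p])‖ ≤ p) :
    ‖((bterm p i k : ℚ) : ℚ_[p])‖ ≤ (p : ℝ) ^ (-1 : ℤ) := by
  have hip : (p : ℝ) > 0 := by positivity
  have heq : bterm p i k
      = bernoulli i * (k.choose i : ℚ) * ((p : ℚ) ^ (k + 1 - i) / ((k + 1 - i : ℕ) : ℚ)) := by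
    have h1 : bterm p i k
        = bernoulli i * ((((k + 1).choose i : ℚ)) / (k + 1)) * (p : ℚ) ^ (k + 1 - i) := by
      unfold bterm; ring
    rw [h1, choose_div_eq i k h.le]; ring
  rw [heq]
  push_cast
  rw [norm_mul, norm_mul, norm_div]
  have h1 : ‖((k.choose i : ℕ) : ℚ_[p])‖ ≤ 1 := norm_nat_le_one p _
  have h2 : ‖(p : ℚ_[p]) ^ (k + 1 - i) / ((k + 1 - i : ℕ) : ℚ_[p])‖ ≤ (p : ℝ) ^ (-2 : ℤ) :=
    norm_pow_div_le p hp _ (by omega)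
  rw [norm_div] at h2
  calc ‖((bernoulli i : ℚ) : ℚ_[p])‖ * ‖((k.choose i : ℕ) : ℚ_[p])‖ *
        (‖(p : ℚ_[p]) ^ (k + 1 - i)‖ / ‖((k + 1 - i : ℕ) : ℚ_[p])‖)
      ≤ (p : ℝ) * 1 * (p : ℝ) ^ (-2 : ℤ) := by
        gcongr
        all_goals first | exact hB | exact h2 | exact h1
    _ = (p : ℝ) ^ (-1 : ℤ) := by
        rw [mul_one, show (-1:ℤ) = 1 + -2 by norm_num,
          zpow_add₀ (by positivity : (p:ℝ) ≠ 0), zpow_one]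

lemma nsub_le_max (q r : ℚ_[p]) : ‖q - r‖ ≤ max ‖q‖ ‖r‖ := by
  rw [sub_eq_add_neg]
  simpa using Padic.nonarchimedean q (-r)

lemma pow_neg_one_le_one : (p : ℝ) ^ (-1 : ℤ) ≤ 1 := by
  have h1 : (1:ℝ) ≤ (p:ℝ) := by exact_mod_cast (Fact.out : p.Prime).one_lt.le
  rw [zpow_neg, zpow_one]
  exact inv_le_one_of_one_le₀ h1

open IsUltrametricDist in
lemma key_eq (k : ℕ) :
    ((p : ℚ_[p])) * ((bernoulli k : ℚ) : ℚ_[p])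
      = ((∑ a ∈ Finset.range p, a ^ k : ℕ) : ℚ_[p])
        - ∑ i ∈ Finset.range k, ((bterm p i k : ℚ) : ℚ_[p]) := by
  have h := faulhaber_eq p k
  rw [Finset.sum_range_succ, bterm_self] at h
  have h2 : (p : ℚ) * bernoulli k
      = ((∑ a ∈ Finset.range p, a ^ k : ℕ) : ℚ) - ∑ i ∈ Finset.range k, bterm p i k := by
    rw [h]; ring
  have := congrArg (fun q : ℚ => (q : ℚ_[p])) h2
  push_cast at this
  convert this using 2 <;> push_cast <;> ring

open IsUltrametricDist in
lemma bern_norm_le (hp : 3 ≤ p) : ∀ k, ‖((bernoulli k : ℚ) : ℚ_[p])‖ ≤ p := by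
  intro k
  induction k using Nat.strong_induction_on with
  | _ k ih =>
  have hsum : ‖∑ i ∈ Finset.range k, ((bterm p i k : ℚ) : ℚ_[p])‖ ≤ 1 := by
    apply norm_sum_le_of_forall_le_of_nonneg zero_le_one
    intro i hi
    calc ‖((bterm p i k : ℚ) : ℚ_[p])‖ ≤ (p : ℝ) ^ (-1 : ℤ) :=
          bterm_norm_le p hp i k (Finset.mem_range.1 hi) (ih i (Finset.mem_range.1 hi))
      _ ≤ 1 := pow_neg_one_le_one p
  have hN : ‖((∑ a ∈ Finset.range p, a ^ k : ℕ) : ℚ_[p])‖ ≤ 1 := norm_nat_le_one p _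
  have hmain : ‖(p : ℚ_[p]) * ((bernoulli k : ℚ) : ℚ_[p])‖ ≤ 1 := by
    rw [key_eq p k]
    exact (nsub_le_max p _ _).trans (max_le hN hsum)
  rw [norm_mul, Padic.norm_p] at hmain
  have hp0 : (0:ℝ) < (p:ℝ)⁻¹ := by positivity
  calc ‖((bernoulli k : ℚ) : ℚ_[p])‖
      = ((p:ℝ)⁻¹ * ‖((bernoulli k : ℚ) : ℚ_[p])‖) * p := by
        field_simp
    _ ≤ 1 * p := by gcongr
    _ = p := one_mul _

open IsUltrametricDist in
lemma bern_norm_eq (hp : 3 ≤ p) (k : ℕ) (hk : 1 ≤ k) (hdk : (p - 1) ∣ k) :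
    ‖((bernoulli k : ℚ) : ℚ_[p])‖ = p := by
  have hpR : (1:ℝ) < p := by exact_mod_cast show 1 < p by omega
  set N : ℕ := ∑ a ∈ Finset.range p, a ^ k with hN
  have hsum : ‖∑ i ∈ Finset.range k, ((bterm p i k : ℚ) : ℚ_[p])‖ ≤ (p : ℝ) ^ (-1 : ℤ) := by
    apply norm_sum_le_of_forall_le_of_nonneg (by positivity)
    intro i hi
    exact bterm_norm_le p hp i k (Finset.mem_range.1 hi) (bern_norm_le p hp i)
  -- p ∣ N + 1
  have hdvdN : (p : ℤ) ∣ ((N : ℤ) + 1) := by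
    haveI : NeZero p := ⟨(Fact.out : p.Prime).ne_zero⟩
    have h0 : ((N : ZMod p) + 1) = 0 := by
      have : (N : ZMod p) = ∑ x : ZMod p, x ^ k := by
        rw [hN]; push_cast
        exact sum_range_cast p k
      rw [this, zmod_sum_pow p k hk hdk]; ring
    have : (((N : ℤ) + 1 : ℤ) : ZMod p) = 0 := by push_cast; exact h0
    exact_mod_cast (ZMod.intCast_zmod_eq_zero_iff_dvd _ _).1 this
  have hN1 : ‖((N : ℚ_[p]) + 1)‖ ≤ (p : ℝ) ^ (-1 : ℤ) := by
    have := (Padic.norm_int_le_pow_iff_dvd ((N : ℤ) + 1) 1).2 (by simpa using hdvdN)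
    simpa using this
  have hkey : (p : ℚ_[p]) * ((bernoulli k : ℚ) : ℚ_[p]) + 1
      = ((N : ℚ_[p]) + 1) - ∑ i ∈ Finset.range k, ((bterm p i k : ℚ) : ℚ_[p]) := by
    rw [key_eq p k]; ring
  have hclose : ‖(p : ℚ_[p]) * ((bernoulli k : ℚ) : ℚ_[p]) + 1‖ ≤ (p : ℝ) ^ (-1 : ℤ) := by
    rw [hkey]
    exact (nsub_le_max p _ _).trans (max_le hN1 hsum)
  have hlt : ‖(p : ℚ_[p]) * ((bernoulli k : ℚ) : ℚ_[p]) + 1‖ < 1 := by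
    calc _ ≤ (p : ℝ) ^ (-1 : ℤ) := hclose
      _ < 1 := by
        rw [zpow_neg, zpow_one]
        rw [inv_lt_one_iff₀]; right; exact hpR
  have hone : ‖(p : ℚ_[p]) * ((bernoulli k : ℚ) : ℚ_[p])‖ = 1 := by
    have h1 : (1:ℝ) = ‖((p : ℚ_[p]) * ((bernoulli k : ℚ) : ℚ_[p]) + 1)
        - (p : ℚ_[p]) * ((bernoulli k : ℚ) : ℚ_[p])‖ := by
      simp
    have h2 := nsub_le_max p ((p : ℚ_[p]) * ((bernoulli k : ℚ) : ℚ_[p]) + 1)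
        ((p : ℚ_[p]) * ((bernoulli k : ℚ) : ℚ_[p]))
    rw [← h1] at h2
    have hge : (1:ℝ) ≤ ‖(p : ℚ_[p]) * ((bernoulli k : ℚ) : ℚ_[p])‖ := by
      rcases max_cases ‖(p : ℚ_[p]) * ((bernoulli k : ℚ) : ℚ_[p]) + 1‖
        ‖(p : ℚ_[p]) * ((bernoulli k : ℚ) : ℚ_[p])‖ with ⟨he, _⟩ | ⟨he, _⟩
      · rw [he] at h2; linarith
      · rw [he] at h2; exact h2
    have hle : ‖(p : ℚ_[p]) * ((bernoulli k : ℚ) : ℚ_[p])‖ ≤ 1 := by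
      rw [key_eq p k]
      refine (nsub_le_max p _ _).trans (max_le (norm_nat_le_one p _) ?_)
      calc _ ≤ (p:ℝ) ^ (-1:ℤ) := hsum
        _ ≤ 1 := pow_neg_one_le_one p
    linarith
  rw [norm_mul, Padic.norm_p] at hone
  have hp0 : (p:ℝ) ≠ 0 := by positivity
  have : ‖((bernoulli k : ℚ) : ℚ_[p])‖
      = (p:ℝ) * ((p:ℝ)⁻¹ * ‖((bernoulli k : ℚ) : ℚ_[p])‖) := by
    rw [← mul_assoc, mul_inv_cancel₀ hp0, one_mul]
  rw [this, hone, mul_one]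

/-- For `p ≥ 3` prime, `m ≥ 1`, and even `k ≥ 4` with `p^(m-1)(p-1) ∣ k`, every
coefficient `-(2k/B_k)·σ_{k-1}(n)` (`n ≥ 1`) of the Eisenstein series `E_k` is a
`p`-adic integer divisible by `p^m`; i.e. `E_k ≡ 1 (mod p^m)`. -/
theorem eisenstein_congruent_one (p : ℕ) [Fact p.Prime] (hp : 3 ≤ p)
    (m : ℕ) (hm : 1 ≤ m) (k : ℕ) (hk4 : 4 ≤ k) (hke : Even k)
    (hdvd : p ^ (m - 1) * (p - 1) ∣ k) (n : ℕ) (hn : 1 ≤ n) :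
    ∃ x : ℤ_[p],
      (x : ℚ_[p]) =
        ((-(2 * k) / bernoulli k * ((ArithmeticFunction.sigma (k - 1)) n : ℚ) : ℚ) : ℚ_[p]) ∧
      (p : ℤ_[p]) ^ m ∣ x := by
  have hpR : (0:ℝ) < p := by positivity
  set c : ℚ := -(2 * k) / bernoulli k * ((ArithmeticFunction.sigma (k - 1)) n : ℚ) with hc
  have hBnorm : ‖((bernoulli k : ℚ) : ℚ_[p])‖ = p :=
    bern_norm_eq p hp k (by omega) (Dvd.dvd.trans (dvd_mul_left _ _) hdvd)
  -- norm of 2k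
  have h2k : ‖((2 * k : ℚ) : ℚ_[p])‖ ≤ (p : ℝ) ^ (-((m - 1 : ℕ) : ℤ)) := by
    have hpk : (p : ℤ) ^ (m - 1) ∣ (2 * k : ℤ) := by
      obtain ⟨t, ht⟩ : p ^ (m - 1) ∣ k := (dvd_mul_right _ _).trans hdvd
      exact ⟨2 * t, by push_cast [ht]; ring⟩
    have := (Padic.norm_int_le_pow_iff_dvd (p := p) (2 * k : ℤ) (m - 1)).2 hpk
    have hcast : (((2 * k : ℤ) : ℚ_[p])) = ((2 * k : ℚ) : ℚ_[p]) := by push_cast; ring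
    rwa [hcast] at this
  have hσ : ‖(((ArithmeticFunction.sigma (k - 1)) n : ℚ) : ℚ_[p])‖ ≤ 1 := by
    have : (((ArithmeticFunction.sigma (k - 1) n : ℕ) : ℚ) : ℚ_[p])
        = ((ArithmeticFunction.sigma (k - 1) n : ℕ) : ℚ_[p]) := by push_cast; ring
    rw [this]
    exact norm_nat_le_one p _
  -- total norm bound
  have hcnorm : ‖((c : ℚ) : ℚ_[p])‖ ≤ (p : ℝ) ^ (-(m : ℤ)) := by
    have hsplit : ((c : ℚ) : ℚ_[p])
        = -(((2 * k : ℚ) : ℚ_[p])) / ((bernoulli k : ℚ) : ℚ_[p])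
          * (((ArithmeticFunction.sigma (k - 1)) n : ℚ) : ℚ_[p]) := by
      rw [hc]; push_cast; ring
    rw [hsplit, norm_mul, norm_div, norm_neg, hBnorm]
    calc ‖((2 * k : ℚ) : ℚ_[p])‖ / (p : ℝ) * ‖(((ArithmeticFunction.sigma (k - 1)) n : ℚ) : ℚ_[p])‖
        ≤ (p : ℝ) ^ (-((m - 1 : ℕ) : ℤ)) / (p : ℝ) * 1 := by gcongr
      _ = (p : ℝ) ^ (-(m : ℤ)) := by
          rw [mul_one, div_eq_mul_inv, ← zpow_neg_one (p : ℝ),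
            ← zpow_add₀ (by positivity : (p:ℝ) ≠ 0)]
          congr 1
          omega
  have hle1 : ‖((c : ℚ) : ℚ_[p])‖ ≤ 1 :=
    hcnorm.trans (zpow_le_one_of_nonpos₀ (by exact_mod_cast show 1 ≤ p by omega) (by omega))
  refine ⟨⟨((c : ℚ) : ℚ_[p]), hle1⟩, rfl, ?_⟩
  exact Ideal.mem_span_singleton.1 ((PadicInt.norm_le_pow_iff_mem_span_pow ⟨_, hle1⟩ m).1 hcnorm)
end

section
/- Let R be a commutative ring, w ≥ 0 an integer, and T a linear endomorphism of R[X,Y]_w (homogeneous polynomials of degree w). Suppose S is a submodule of R[X,Y]_w, c ∈ R, and p^m·R[X,Y]_w ∩ S = p^m·S, and (T - c·id)(S) ⊆ p^m·S. If furthermore R = ℤ and S is free of finite rank, then every eigenvalue λ (in an algebraic closure of ℚ_p) of T acting on S ⊗ ℂ satisfies v_p(λ - c) ≥ m. -/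
variable {p : ℕ} [Fact p.Prime]

open Polynomial Matrix in
/-- Auxiliary: characteristic polynomial of `c•1 + a•A` composed with `C c + C a * X`. -/
lemma charpoly_smul_add_comp {R : Type*} [CommRing R] {ι : Type*} [Fintype ι] [DecidableEq ι]
    (c a : R) (A : Matrix ι ι R) :
    ((c • (1 : Matrix ι ι R) + a • A).charpoly).comp (C c + C a * X) =
      C a ^ (Fintype.card ι) * A.charpoly := by
  have hφ := AlgHom.map_det (aeval (C c + C a * X) : R[X] →ₐ[R] R[X])
    (charmatrix (c • (1 : Matrix ι ι R) + a • A))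
  have hcomp : ((c • (1 : Matrix ι ι R) + a • A).charpoly).comp (C c + C a * X)
      = ((charmatrix (c • (1 : Matrix ι ι R) + a • A)).map
          (aeval (C c + C a * X) : R[X] → R[X])).det := by
    rw [Matrix.charpoly, comp_eq_aeval, hφ]
    rfl
  have hmap : (charmatrix (c • (1 : Matrix ι ι R) + a • A)).map
      (aeval (C c + C a * X) : R[X] → R[X]) = (C a) • charmatrix A := by
    apply Matrix.ext
    intro i j
    by_cases h : i = j
    · subst h
      simp only [map_apply, Matrix.add_apply, Matrix.smul_apply, Matrix.one_apply_eq,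
        charmatrix_apply_eq, smul_eq_mul, map_sub, aeval_X, aeval_C, Polynomial.algebraMap_eq,
        map_add, _root_.map_mul, Polynomial.C_1, Polynomial.C_mul, _root_.map_one]
      ring
    · simp only [map_apply, Matrix.add_apply, Matrix.smul_apply, Matrix.one_apply_ne h,
        charmatrix_apply_ne _ _ _ h, smul_eq_mul, map_neg, aeval_C, Polynomial.algebraMap_eq,
        mul_zero, add_zero, _root_.map_mul]
      simp [Polynomial.C_mul]
  rw [hcomp, hmap, Matrix.det_smul, Matrix.charpoly]

/-- The algebraic closure of `ℚ_p` as a `ℤ_p`-algebra via the canonical maps. -/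
noncomputable instance : Algebra ℤ_[p] (AlgebraicClosure ℚ_[p]) :=
  ((algebraMap ℚ_[p] (AlgebraicClosure ℚ_[p])).comp
    (algebraMap ℤ_[p] ℚ_[p])).toAlgebra

open Polynomial Matrix in
/-- Congruence criterion: let `T` be a linear endomorphism of a module `M` (playing the
role of `ℤ[X,Y]_w`), `S ⊆ M` a submodule with `p^m M ∩ S = p^m S` and
`(T - c·id)(S) ⊆ p^m S`, and suppose `S` is free of finite rank over `ℤ` and
`T` restricts to `TS` on `S`. Then every eigenvalue `λ` of `T` on `S ⊗ ℂ` (i.e. every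
root of the characteristic polynomial of `TS`, viewed in an algebraic closure of `ℚ_p`)
satisfies `v_p(λ - c) ≥ m`, i.e. `(λ - c)/p^m` is integral over `ℤ_p`. -/
theorem eigenvalue_congruence_criterion (m : ℕ) (hm : 1 ≤ m) (c : ℤ)
    (M : Type) [AddCommGroup M] [Module ℤ M]
    (T : M →ₗ[ℤ] M) (S : Submodule ℤ M)
    [Module.Free ℤ S] [Module.Finite ℤ S]
    (hsat : ∀ x ∈ S, (∃ y : M, x = ((p : ℤ) ^ m) • y) →
      ∃ z ∈ S, x = ((p : ℤ) ^ m) • z)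
    (hTS : ∀ x ∈ S, ∃ z ∈ S, T x - c • x = ((p : ℤ) ^ m) • z)
    (TS : S →ₗ[ℤ] S)
    (hcomm : ∀ x : S, (TS x : M) = T (x : M))
    (lam : AlgebraicClosure ℚ_[p])
    (hroot : Polynomial.aeval lam (LinearMap.charpoly TS) = 0) :
    IsIntegral ℤ_[p] ((lam - (c : AlgebraicClosure ℚ_[p])) / (p : AlgebraicClosure ℚ_[p]) ^ m) := by
  classical
  have hp0 : ((p : AlgebraicClosure ℚ_[p]) ^ m) ≠ 0 := by
    have : (p : AlgebraicClosure ℚ_[p]) ≠ 0 := by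
      exact_mod_cast Nat.cast_ne_zero.mpr (Fact.out : p.Prime).ne_zero
    exact pow_ne_zero _ this
  set μ : AlgebraicClosure ℚ_[p] :=
    (lam - (c : AlgebraicClosure ℚ_[p])) / (p : AlgebraicClosure ℚ_[p]) ^ m with hμdef
  let b := Module.Free.chooseBasis ℤ S
  set ι := Module.Free.ChooseBasisIndex ℤ S
  have hz : ∀ j : ι, ∃ z : S, TS (b j) = c • b j + ((p : ℤ) ^ m) • z := by
    intro j
    obtain ⟨z, hzS, hzeq⟩ := hTS (b j : M) (b j).2
    refine ⟨⟨z, hzS⟩, Subtype.ext ?_⟩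
    have h1 : T (b j : M) = ((p : ℤ) ^ m) • z + c • (b j : M) := sub_eq_iff_eq_add.mp hzeq
    push_cast [hcomm]
    rw [h1, add_comm]
  choose z hzeq using hz
  set N : Matrix ι ι ℤ := fun i j => b.repr (z j) i with hN
  have hMA : LinearMap.toMatrix b b TS = c • (1 : Matrix ι ι ℤ) + ((p : ℤ) ^ m) • N := by
    apply Matrix.ext
    intro i j
    rw [LinearMap.toMatrix_apply, hzeq j, Matrix.add_apply, Matrix.smul_apply,
      Matrix.smul_apply, Matrix.one_apply]
    by_cases h : i = j
    · subst h
      simp [hN, Matrix.add_apply, Matrix.smul_apply, Matrix.one_apply, Finsupp.single_apply]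
    · simp [hN, Matrix.add_apply, Matrix.smul_apply, Matrix.one_apply, h, Ne.symm h,
        Finsupp.single_apply]
  have hkey := charpoly_smul_add_comp c ((p : ℤ) ^ m) N
  have hch : LinearMap.charpoly TS = (c • (1 : Matrix ι ι ℤ) + ((p : ℤ) ^ m) • N).charpoly := by
    rw [← hMA, LinearMap.charpoly_toMatrix]
  have heval : aeval μ ((C c + C ((p : ℤ) ^ m) * X) : Polynomial ℤ) = lam := by
    simp only [map_add, _root_.map_mul, aeval_C, aeval_X]
    push_cast
    field_simp [hμdef]
    rw [hμdef, eq_intCast, mul_div_assoc', mul_div_cancel_left₀ _ hp0]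
    ring
  have h0 : ((p : AlgebraicClosure ℚ_[p]) ^ m) ^ (Fintype.card ι) * aeval μ N.charpoly = 0 := by
    have h := congrArg (aeval μ) hkey
    rw [aeval_comp, heval, ← hch, hroot] at h
    have h2 := h.symm
    rw [_root_.map_mul, map_pow, aeval_C] at h2
    push_cast at h2 ⊢
    exact h2
  have hev : aeval μ N.charpoly = 0 := by
    rcases mul_eq_zero.mp h0 with h | h
    · exact absurd h (pow_ne_zero _ hp0)
    · exact h
  have hint : IsIntegral ℤ μ := ⟨N.charpoly, N.charpoly_monic, hev⟩
  exact IsIntegral.tower_top (A := ℤ_[p]) hint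
end

section
/- Let w ≡ 0 (mod 2) and i ≡ 0 (mod 2), 0 ≤ i ≤ w, and let P = X^i Y^{w-i}. Then in ℤ[X,Y], T₂P - (2·(P + P[σ]) + (P[γ] + P[γτ] + P[γτ²])) ∈ 3·ℤ[X,Y], where T₂P = P[[[2,0],[0,1]]] + P[[[1,0],[0,2]]] + P[[[2,1],[0,1]]] + P[[[1,0],[1,2]]], σ = [[0,-1],[1,0]], τ = [[0,-1],[1,-1]], and γ = [[0,1],[2,0]]. -/
open MvPolynomial

/-- The right action of the integer matrix `[[a,b],[c,d]]` on polynomials in `X, Y`: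
`P[γ](X,Y) = P(aX + bY, cX + dY)`. -/
noncomputable def matAct (a b c d : ℤ) (P : MvPolynomial (Fin 2) ℤ) :
    MvPolynomial (Fin 2) ℤ :=
  MvPolynomial.aeval ![a • X 0 + b • X 1, c • X 0 + d • X 1] P

lemma matAct_pow_pow (a b c d : ℤ) (i j : ℕ) :
    matAct a b c d ((X 0) ^ i * (X 1) ^ j)
      = (C a * X 0 + C b * X 1) ^ i * (C c * X 0 + C d * X 1) ^ j := by
  simp [matAct, zsmul_eq_mul, algebraMap_eq]

lemma key3 {a b : MvPolynomial (Fin 2) ℤ} {n : ℕ} (hn : Even n)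
    (h : (3 : MvPolynomial (Fin 2) ℤ) ∣ a + b) : (3 : MvPolynomial (Fin 2) ℤ) ∣ a ^ n - b ^ n := by
  have h1 := sub_dvd_pow_sub_pow a (-b) n
  rw [sub_neg_eq_add, hn.neg_pow] at h1
  exact h.trans h1

/-- Case (i) of the example proposition: for `w` and `i` even, `0 ≤ i ≤ w`, and
`P = X^i Y^(w-i)`, we have `T₂P ≡ 2(P + P[σ]) + (P[γ] + P[γτ] + P[γτ²]) (mod 3ℤ[X,Y])`,
where `T₂` is the Heilbronn–Merel Hecke operator at 2 (given by the matrices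
`[[2,0],[0,1]]`, `[[1,0],[0,2]]`, `[[2,1],[0,1]]`, `[[1,0],[1,2]]`),
`σ = [[0,-1],[1,0]]`, `τ = [[0,-1],[1,-1]]`, `γ = [[0,1],[2,0]]`
(so `γτ = [[1,-1],[0,-2]]` and `γτ² = [[-1,0],[-2,2]]`). -/
theorem T2_even_congruence (w i : ℕ) (hw : Even w) (hi : Even i) (hiw : i ≤ w) :
    (3 : MvPolynomial (Fin 2) ℤ) ∣
      ((matAct 2 0 0 1 ((X 0) ^ i * (X 1) ^ (w - i))
          + matAct 1 0 0 2 ((X 0) ^ i * (X 1) ^ (w - i))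
          + matAct 2 1 0 1 ((X 0) ^ i * (X 1) ^ (w - i))
          + matAct 1 0 1 2 ((X 0) ^ i * (X 1) ^ (w - i)))
        - (2 * ((X 0) ^ i * (X 1) ^ (w - i)
              + matAct 0 (-1) 1 0 ((X 0) ^ i * (X 1) ^ (w - i)))
          + (matAct 0 1 2 0 ((X 0) ^ i * (X 1) ^ (w - i))
            + matAct 1 (-1) 0 (-2) ((X 0) ^ i * (X 1) ^ (w - i))
            + matAct (-1) 0 (-2) 2 ((X 0) ^ i * (X 1) ^ (w - i))))) := by
  have hj : Even (w - i) := hw.tsub hi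



  simp only [matAct_pow_pow, map_ofNat, map_one, map_zero, map_neg, one_mul, zero_mul,
    neg_mul, add_zero, zero_add, neg_neg]
  -- now goal in terms of C-free numerals hopefully; normalize

  rw [show (-(2*(X 0 : MvPolynomial (Fin 2) ℤ)) + 2 * X 1) = -(2 * X 0 - 2 * X 1) by ring,
    hj.neg_pow, hi.neg_pow, hi.neg_pow, hj.neg_pow]
  obtain ⟨c1, e1⟩ := key3 (a := 2 * X 0) (b := X 0) hi ⟨X 0, by ring⟩
  obtain ⟨c2, e2⟩ := key3 (a := 2 * X 1) (b := X 1) hj ⟨X 1, by ring⟩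
  obtain ⟨c3, e3⟩ := key3 (a := 2 * X 0 + X 1) (b := X 0 - X 1) hi ⟨X 0, by ring⟩
  obtain ⟨c5, e5⟩ := key3 (a := X 0 + 2 * X 1) (b := 2 * X 0 - 2 * X 1) hj ⟨X 0, by ring⟩
  obtain ⟨c6, e6⟩ := key3 (a := 2 * X 0) (b := X 0) hj ⟨X 0, by ring⟩
  refine ⟨c1 * X 1 ^ (w - i) + X 0 ^ i * c2 + c3 * X 1 ^ (w - i) - (X 0 - X 1) ^ i * c2
    + X 0 ^ i * c5 - X 1 ^ i * X 0 ^ (w - i) - X 1 ^ i * c6, ?_⟩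
  linear_combination (X 1 ^ (w - i)) * e1 + (X 0 ^ i) * e2 + (X 1 ^ (w - i)) * e3
    - ((X 0 - X 1) ^ i) * e2 + (X 0 ^ i) * e5 - (X 1 ^ i) * e6
end
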